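/- There exists a constant c > 0 such that the following holds in the random model whenever n ≥ 2 and 1 ≤ k ≤ n−1: with probability at least 1 − 2·exp(−k·(n−k)·(nk)^{−0.98}/6) − 2^{2n+1}·exp(−3·(n−k)/2) over A, for every finite simple graph G = (V,E) in which S is an independent set and in which {u,v} ∈ E for every (u,v) ∈ E'(A), and for every feasible C-SDP solution x* : V → ℝⁿ for G with obj(x*) ≤ obj(y) for every feasible C-SDP solution y : V → ℝ^{n+1} for G, one has ∑_{(u,v) ∈ S × S} ‖x*_u − x*_v‖² ≤ c·n·√k. -/

import Mathlib

open Finset MeasureTheory Metric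

/-- The product measure of independent fair coins, one for each pair of vertices. -/
noncomputable def coin (V : Type) [Fintype V] : Measure ((V × V) → Bool) :=
  Measure.pi fun _ => (PMF.bernoulli 2⁻¹ (by norm_num)).toMeasure

/-- `E'(A)`: the set of pairs `(u,v) ∈ S × (V∖S)` whose coin came up heads. -/
def Eset {V : Type} [Fintype V] [DecidableEq V] (S : Finset V) (A : (V × V) → Bool) :
    Finset (V × V) :=
  Finset.univ.filter fun p => p.1 ∈ S ∧ p.2 ∉ S ∧ A p = true

/-- A feasible solution to the crude SDP: unit vectors, pairwise nonnegative inner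
products, and orthogonal vectors on edges. -/
def Feasible {V : Type*} {H : Type*} [NormedAddCommGroup H] [InnerProductSpace ℝ H]
    (G : SimpleGraph V) (x : V → H) : Prop :=
  (∀ v, ‖x v‖ = 1) ∧ (∀ u v : V, (0 : ℝ) ≤ inner ℝ (x u) (x v)) ∧
    (∀ u v : V, G.Adj u v → (inner ℝ (x u) (x v) : ℝ) = 0)

/-- The crude SDP objective: the sum of squared distances over all ordered pairs. -/
noncomputable def obj {V : Type*} [Fintype V] {H : Type*} [NormedAddCommGroup H]
    [InnerProductSpace ℝ H] (x : V → H) : ℝ :=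
  ∑ u : V, ∑ v : V, ‖x u - x v‖ ^ 2

noncomputable def coinM (ι : Type*) [Fintype ι] : Measure (ι → Bool) :=
  Measure.pi fun _ => (PMF.bernoulli 2⁻¹ (by norm_num)).toMeasure

set_option linter.unusedSectionVars false
set_option linter.unusedVariables false

namespace Stmt7Aux


variable {ι : Type*} [Fintype ι] [DecidableEq ι]

/-- the ±1 value of a coin -/
def sgn (b : Bool) : ℝ := if b then -1 else 1

lemma coinM_singleton (A : ι → Bool) : coinM ι {A} = 2⁻¹ ^ (Fintype.card ι) := by
  rw [coinM, ← Set.univ_pi_singleton A, Measure.pi_pi]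
  have h : ∀ p : ι, ((PMF.bernoulli 2⁻¹ (by norm_num)).toMeasure : Measure Bool) {A p} = 2⁻¹ := by
    intro p
    rw [PMF.toMeasure_apply_singleton _ _ (measurableSet_singleton _), PMF.bernoulli_apply]
    cases A p <;> simp [ENNReal.one_sub_inv_two]
  simp only [h, Finset.prod_const, Finset.card_univ]

lemma coinM_coe_finset (F : Finset (ι → Bool)) :
    coinM ι (↑F : Set (ι → Bool)) = F.card * 2⁻¹ ^ (Fintype.card ι) := by
  have h : (↑F : Set (ι → Bool)) = ⋃ A ∈ F, {A} := by ext a; simp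
  rw [h, measure_biUnion_finset]
  · rw [Finset.sum_congr rfl (fun A _ => coinM_singleton A), Finset.sum_const, nsmul_eq_mul]
  · intro a _ b _ hab
    simp [Set.disjoint_singleton, hab]
  · intro b _; exact measurableSet_singleton _

instance : IsProbabilityMeasure (coinM ι) := by
  rw [coinM]; infer_instance


set_option maxHeartbeats 1000000 in
lemma sum_exp_le (w : ι → ℝ) (lam : ℝ) :
    ∑ A : ι → Bool, Real.exp (lam * ∑ p, w p * sgn (A p))
      ≤ 2 ^ (Fintype.card ι) * Real.exp (lam ^ 2 * (∑ p, w p ^ 2) / 2) := by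
  classical
  have h1 : ∀ A : ι → Bool, Real.exp (lam * ∑ p, w p * sgn (A p))
      = ∏ p, Real.exp (lam * (w p * sgn (A p))) := by
    intro A; rw [← Real.exp_sum, ← Finset.mul_sum]
  calc ∑ A : ι → Bool, Real.exp (lam * ∑ p, w p * sgn (A p))
      = ∑ A : ι → Bool, ∏ p, Real.exp (lam * (w p * sgn (A p))) := by
        exact Finset.sum_congr rfl fun A _ => h1 A
    _ = ∏ p, ∑ b : Bool, Real.exp (lam * (w p * sgn b)) :=
        (Fintype.prod_sum (κ := fun _ : ι => Bool)
          (fun p b => Real.exp (lam * (w p * sgn b)))).symm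
    _ ≤ ∏ p, 2 * Real.exp ((lam * w p) ^ 2 / 2) := by
        apply Finset.prod_le_prod
        · intro p _
          exact Finset.sum_nonneg fun b _ => (Real.exp_pos _).le
        · intro p _
          have : ∑ b : Bool, Real.exp (lam * (w p * sgn b))
              = 2 * Real.cosh (lam * w p) := by
            rw [Real.cosh_eq]
            simp [sgn, Fintype.sum_bool, mul_comm]
            ring_nf
          rw [this]
          have := Real.cosh_le_exp_half_sq (lam * w p)
          linarith
    _ = 2 ^ (Fintype.card ι) * Real.exp (lam ^ 2 * (∑ p, w p ^ 2) / 2) := by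
        rw [Finset.prod_mul_distrib, Finset.prod_const, Finset.card_univ, ← Real.exp_sum,
          ← Finset.sum_div]
        rw [Finset.mul_sum]
        have h2 : (∑ i : ι, (lam * w i) ^ 2) = ∑ i : ι, lam ^ 2 * w i ^ 2 :=
          Finset.sum_congr rfl fun p _ => by ring
        rw [h2]

lemma chernoff_card (w : ι → ℝ) (hw : ∑ p, w p ^ 2 ≤ 1) (t : ℝ) (ht : 0 ≤ t)
    [DecidablePred fun A : ι → Bool => t ≤ ∑ p, w p * sgn (A p)] :
    ((Finset.univ.filter fun A : ι → Bool => t ≤ ∑ p, w p * sgn (A p)).card : ℝ)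
      ≤ 2 ^ (Fintype.card ι) * Real.exp (-(t ^ 2) / 2) := by
  classical
  set F := Finset.univ.filter fun A : ι → Bool => t ≤ ∑ p, w p * sgn (A p) with hF
  have key : (F.card : ℝ) * Real.exp (t * t)
      ≤ 2 ^ (Fintype.card ι) * Real.exp (t ^ 2 / 2) := by
    calc (F.card : ℝ) * Real.exp (t * t) = ∑ _A ∈ F, Real.exp (t * t) := by
          rw [Finset.sum_const, nsmul_eq_mul]
      _ ≤ ∑ A ∈ F, Real.exp (t * ∑ p, w p * sgn (A p)) := by
          apply Finset.sum_le_sum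
          intro A hA
          have := (Finset.mem_filter.mp hA).2
          exact Real.exp_le_exp.mpr (by nlinarith)
      _ ≤ ∑ A : ι → Bool, Real.exp (t * ∑ p, w p * sgn (A p)) := by
          apply Finset.sum_le_sum_of_subset_of_nonneg (Finset.filter_subset _ _)
          intro A _ _; exact (Real.exp_pos _).le
      _ ≤ 2 ^ (Fintype.card ι) * Real.exp (t ^ 2 * (∑ p, w p ^ 2) / 2) := sum_exp_le w t
      _ ≤ 2 ^ (Fintype.card ι) * Real.exp (t ^ 2 / 2) := by
          apply mul_le_mul_of_nonneg_left _ (by positivity)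
          apply Real.exp_le_exp.mpr
          nlinarith [sq_nonneg t]
  have h2 : Real.exp (-(t ^ 2) / 2) = Real.exp (t ^ 2 / 2) * (Real.exp (t * t))⁻¹ := by
    rw [← Real.exp_neg, ← Real.exp_add]; ring_nf
  rw [h2]
  have key2 := (le_div_iff₀ (Real.exp_pos (t * t))).mpr key
  calc (F.card : ℝ) ≤ 2 ^ (Fintype.card ι) * Real.exp (t ^ 2 / 2) / Real.exp (t * t) := key2
    _ = 2 ^ (Fintype.card ι) * (Real.exp (t ^ 2 / 2) * (Real.exp (t * t))⁻¹) := by ring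


lemma coinM_one_sided (w : ι → ℝ) (hw : ∑ p, w p ^ 2 ≤ 1) (t : ℝ) (ht : 0 ≤ t) :
    coinM ι {A : ι → Bool | t ≤ ∑ p, w p * sgn (A p)}
      ≤ ENNReal.ofReal (Real.exp (-(t ^ 2) / 2)) := by
  classical
  set F := Finset.univ.filter fun A : ι → Bool => t ≤ ∑ p, w p * sgn (A p) with hF
  have hset : {A : ι → Bool | t ≤ ∑ p, w p * sgn (A p)} = (↑F : Set (ι → Bool)) := by
    ext A; simp [hF]
  rw [hset, coinM_coe_finset]
  have hc := chernoff_card w hw t ht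
  set N := Fintype.card ι
  have h21 : (2⁻¹ : ENNReal) = ENNReal.ofReal ((2 : ℝ)⁻¹) := by
    rw [ENNReal.ofReal_inv_of_pos (by norm_num)]
    norm_num
  have hcast : (F.card : ENNReal) ≤ ENNReal.ofReal ((2 : ℝ) ^ N * Real.exp (-(t ^ 2) / 2)) := by
    rw [← ENNReal.ofReal_natCast]
    exact ENNReal.ofReal_le_ofReal hc
  calc (F.card : ENNReal) * 2⁻¹ ^ N
      ≤ ENNReal.ofReal ((2 : ℝ) ^ N * Real.exp (-(t ^ 2) / 2)) * 2⁻¹ ^ N :=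
        mul_le_mul_left hcast _
    _ = ENNReal.ofReal ((2 : ℝ) ^ N * Real.exp (-(t ^ 2) / 2)) *
          ENNReal.ofReal (((2 : ℝ)⁻¹) ^ N) := by rw [h21, ENNReal.ofReal_pow (by norm_num)]
    _ = ENNReal.ofReal ((2 : ℝ) ^ N * Real.exp (-(t ^ 2) / 2) * ((2 : ℝ)⁻¹) ^ N) := by
        rw [← ENNReal.ofReal_mul (by positivity)]
    _ = ENNReal.ofReal (Real.exp (-(t ^ 2) / 2)) := by
        congr 1
        have : (2 : ℝ) ^ N * ((2 : ℝ)⁻¹) ^ N = 1 := by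
          rw [← mul_pow]; norm_num
        rw [mul_right_comm, this, one_mul]

lemma coinM_abs (w : ι → ℝ) (hw : ∑ p, w p ^ 2 ≤ 1) (t : ℝ) (ht : 0 ≤ t) :
    coinM ι {A : ι → Bool | t ≤ |∑ p, w p * sgn (A p)|}
      ≤ ENNReal.ofReal (2 * Real.exp (-(t ^ 2) / 2)) := by
  have hsub : {A : ι → Bool | t ≤ |∑ p, w p * sgn (A p)|}
      ⊆ {A : ι → Bool | t ≤ ∑ p, w p * sgn (A p)}
        ∪ {A : ι → Bool | t ≤ ∑ p, (-w) p * sgn (A p)} := by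
    intro A hA
    have hA' : t ≤ |∑ p, w p * sgn (A p)| := hA
    rcases le_abs.mp hA' with h | h
    · exact Or.inl h
    · right
      simpa [neg_mul, Finset.sum_neg_distrib] using h
  have hw2 : ∑ p, (-w) p ^ 2 ≤ 1 := by simpa using hw
  calc coinM ι {A : ι → Bool | t ≤ |∑ p, w p * sgn (A p)|}
      ≤ coinM ι ({A : ι → Bool | t ≤ ∑ p, w p * sgn (A p)}
          ∪ {A : ι → Bool | t ≤ ∑ p, (-w) p * sgn (A p)}) := measure_mono hsub
    _ ≤ coinM ι {A : ι → Bool | t ≤ ∑ p, w p * sgn (A p)}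
          + coinM ι {A : ι → Bool | t ≤ ∑ p, (-w) p * sgn (A p)} := measure_union_le _ _
    _ ≤ ENNReal.ofReal (Real.exp (-(t ^ 2) / 2)) + ENNReal.ofReal (Real.exp (-(t ^ 2) / 2)) :=
        add_le_add (coinM_one_sided w hw t ht) (coinM_one_sided (-w) hw2 t ht)
    _ = ENNReal.ofReal (2 * Real.exp (-(t ^ 2) / 2)) := by
        rw [← ENNReal.ofReal_add (by positivity) (by positivity)]
        ring_nf





lemma sep_card_le (F : Finset (EuclideanSpace ℝ ι)) (hF : ∀ y ∈ F, ‖y‖ = 1)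
    (hsep : ∀ y ∈ F, ∀ z ∈ F, y ≠ z → 4⁻¹ ≤ dist y z) :
    F.card ≤ 9 ^ (Fintype.card ι) := by
  set m := Fintype.card ι
  let H := EuclideanSpace ℝ ι
  let μ : Measure (EuclideanSpace ℝ ι) := volume
  have hm : Module.finrank ℝ (EuclideanSpace ℝ ι) = m := finrank_euclideanSpace
  set B := μ (ball (0 : EuclideanSpace ℝ ι) 1) with hB
  have hB0 : B ≠ 0 := (measure_ball_pos μ _ (by norm_num)).ne'
  have hBtop : B ≠ ⊤ := measure_ball_lt_top.ne
  have hdisj : (↑F : Set (EuclideanSpace ℝ ι)).PairwiseDisjoint (fun y => ball y 8⁻¹) := by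
    intro y hy z hz hyz
    apply ball_disjoint_ball
    calc (8⁻¹ : ℝ) + 8⁻¹ = 4⁻¹ := by norm_num
      _ ≤ dist y z := hsep y hy z hz hyz
  have hunion : μ (⋃ y ∈ F, ball y 8⁻¹) = F.card * (ENNReal.ofReal ((8 : ℝ)⁻¹ ^ m) * B) := by
    rw [measure_biUnion_finset hdisj (fun y _ => measurableSet_ball)]
    have : ∀ y ∈ F, μ (ball y 8⁻¹) = ENNReal.ofReal ((8 : ℝ)⁻¹ ^ m) * B := by
      intro y _
      rw [Measure.addHaar_ball_center, Measure.addHaar_ball_of_pos μ _ (by norm_num : (0:ℝ) < 8⁻¹), hm]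
    rw [Finset.sum_congr rfl this, Finset.sum_const, nsmul_eq_mul]
  have hsubset : (⋃ y ∈ F, ball y 8⁻¹) ⊆ ball (0 : EuclideanSpace ℝ ι) (9 / 8) := by
    intro z hz
    simp only [Set.mem_iUnion, mem_ball] at hz ⊢
    obtain ⟨y, hy, hzy⟩ := hz
    have : dist y 0 = 1 := by
      rw [dist_zero_right]; exact hF y hy
    calc dist z 0 ≤ dist z y + dist y 0 := dist_triangle _ _ _
      _ < 8⁻¹ + 1 := by rw [this]; linarith
      _ ≤ 9 / 8 := by norm_num
  have hball : μ (ball (0 : EuclideanSpace ℝ ι) (9 / 8)) = ENNReal.ofReal ((9 / 8 : ℝ) ^ m) * B := by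
    rw [Measure.addHaar_ball_of_pos μ _ (by norm_num : (0:ℝ) < 9 / 8), hm]
  have key : (F.card : ENNReal) * ENNReal.ofReal ((8 : ℝ)⁻¹ ^ m)
      ≤ ENNReal.ofReal ((9 / 8 : ℝ) ^ m) := by
    have h1 : (F.card : ENNReal) * ENNReal.ofReal ((8 : ℝ)⁻¹ ^ m) * B
        ≤ ENNReal.ofReal ((9 / 8 : ℝ) ^ m) * B := by
      rw [mul_assoc, ← hunion, ← hball]
      exact measure_mono hsubset
    exact (ENNReal.mul_le_mul_iff_left hB0 hBtop).mp h1
  have h9 : ENNReal.ofReal ((9 / 8 : ℝ) ^ m)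
      = (9 ^ m : ℕ) * ENNReal.ofReal ((8 : ℝ)⁻¹ ^ m) := by
    rw [← ENNReal.ofReal_natCast (9 ^ m), ← ENNReal.ofReal_mul (by positivity)]
    congr 1
    push_cast
    rw [← mul_pow]
    norm_num
  rw [h9] at key
  have := (ENNReal.mul_le_mul_iff_left (a := (F.card : ENNReal)) (b := ((9 ^ m : ℕ) : ENNReal))
      (by positivity : ENNReal.ofReal ((8 : ℝ)⁻¹ ^ m) ≠ 0) ENNReal.ofReal_ne_top).mp key
  exact_mod_cast this

lemma exists_net (ι : Type*) [Fintype ι] :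
    ∃ N : Finset (EuclideanSpace ℝ ι), N.card ≤ 9 ^ (Fintype.card ι) ∧
      (∀ y ∈ N, ‖y‖ = 1) ∧
      ∀ x : EuclideanSpace ℝ ι, ‖x‖ = 1 → ∃ y ∈ N, ‖x - y‖ < 4⁻¹ := by
  classical
  set m := Fintype.card ι
  set P : Finset (EuclideanSpace ℝ ι) → Prop := fun F => (∀ y ∈ F, ‖y‖ = 1) ∧
    ∀ y ∈ F, ∀ z ∈ F, y ≠ z → 4⁻¹ ≤ dist y z with hP
  set C : Set ℕ := {c | ∃ F, P F ∧ F.card = c} with hC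
  have h0 : 0 ∈ C := ⟨∅, ⟨by simp, by simp⟩, rfl⟩
  have hbdd : ∀ c ∈ C, c ≤ 9 ^ m := by
    rintro c ⟨F, ⟨h1, h2⟩, rfl⟩
    exact sep_card_le F h1 h2
  have hMx : sSup C ∈ C := Nat.sSup_mem ⟨0, h0⟩ ⟨9 ^ m, hbdd⟩
  obtain ⟨F, hPF, hcard⟩ := hMx
  refine ⟨F, ?_, hPF.1, ?_⟩
  · rw [hcard]; exact hbdd _ ⟨F, hPF, hcard⟩
  · intro x hx
    by_contra hcon
    push_neg at hcon
    have hxF : x ∉ F := by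
      intro hxF
      have := hcon x hxF
      simp at this
      norm_num at this
    have hsep' : ∀ y ∈ F, 4⁻¹ ≤ dist x y := by
      intro y hy
      rw [dist_eq_norm]
      exact hcon y hy
    have hPF' : P (insert x F) := by
      constructor
      · intro y hy
        rcases Finset.mem_insert.mp hy with rfl | hy
        · exact hx
        · exact hPF.1 y hy
      · intro y hy z hz hyz
        rcases Finset.mem_insert.mp hy with h1 | h1
        · rcases Finset.mem_insert.mp hz with h2 | h2
          · exact absurd (h1.trans h2.symm) hyz
          · rw [h1]; exact hsep' z h2
        · rcases Finset.mem_insert.mp hz with h2 | h2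
          · rw [h2, dist_comm]; exact hsep' y h1
          · exact hPF.2 y h1 z h2 hyz
    have : F.card + 1 ∈ C := ⟨insert x F, hPF', by rw [Finset.card_insert_of_notMem hxF]⟩
    have hle := le_csSup ⟨9 ^ m, fun c hc => hbdd c hc⟩ this
    rw [hcard] at hle
    omega



variable {a b : Type*} [Fintype a] [Fintype b]

noncomputable def matL (M : a → b → ℝ) : EuclideanSpace ℝ a →ₗ[ℝ] EuclideanSpace ℝ b where
  toFun w := (WithLp.equiv 2 _).symm (fun v => ∑ u, M u v * w u)
  map_add' x y := by
    apply PiLp.ext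
    intro v
    simp only [WithLp.equiv_symm_apply, PiLp.toLp_apply, PiLp.add_apply]
    rw [← Finset.sum_add_distrib]
    exact Finset.sum_congr rfl fun u _ => by ring
  map_smul' c x := by
    apply PiLp.ext
    intro v
    simp only [WithLp.equiv_symm_apply, PiLp.toLp_apply, PiLp.smul_apply, RingHom.id_apply, smul_eq_mul]
    rw [Finset.mul_sum]
    exact Finset.sum_congr rfl fun u _ => by ring

lemma matL_apply (M : a → b → ℝ) (w : EuclideanSpace ℝ a) (v : b) :
    matL M w v = ∑ u, M u v * w u := rfl

noncomputable def matCLM (M : a → b → ℝ) : EuclideanSpace ℝ a →L[ℝ] EuclideanSpace ℝ b :=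
  LinearMap.toContinuousLinearMap (matL M)

lemma matCLM_apply (M : a → b → ℝ) (w : EuclideanSpace ℝ a) (v : b) :
    matCLM M w v = ∑ u, M u v * w u := rfl

lemma norm_sq_eq {ι : Type*} [Fintype ι] (x : EuclideanSpace ℝ ι) :
    ‖x‖ ^ 2 = ∑ i, x i ^ 2 := by
  rw [EuclideanSpace.norm_eq]
  rw [Real.sq_sqrt (Finset.sum_nonneg fun i _ => by positivity)]
  exact Finset.sum_congr rfl fun i _ => by rw [Real.norm_eq_abs, sq_abs]

lemma inner_matCLM (M : a → b → ℝ) (w : EuclideanSpace ℝ a) (q : EuclideanSpace ℝ b) :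
    (inner ℝ (matCLM M w) q : ℝ) = ∑ u, ∑ v, w u * q v * M u v := by
  rw [PiLp.inner_apply]
  rw [Finset.sum_comm]
  apply Finset.sum_congr rfl
  intro v _
  simp only [RCLike.inner_apply, conj_trivial, matCLM_apply]
  rw [Finset.mul_sum]
  exact Finset.sum_congr rfl fun u _ => by ring

lemma opnorm_from_net (M : a → b → ℝ) (t : ℝ) (ht : 0 ≤ t)
    (Na : Finset (EuclideanSpace ℝ a)) (Nb : Finset (EuclideanSpace ℝ b))
    (hNaU : ∀ y ∈ Na, ‖y‖ = 1)
    (hNbU : ∀ y ∈ Nb, ‖y‖ = 1)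
    (hNaC : ∀ x : EuclideanSpace ℝ a, ‖x‖ = 1 → ∃ y ∈ Na, ‖x - y‖ < 4⁻¹)
    (hNbC : ∀ x : EuclideanSpace ℝ b, ‖x‖ = 1 → ∃ y ∈ Nb, ‖x - y‖ < 4⁻¹)
    (hev : ∀ p ∈ Na, ∀ q ∈ Nb, |∑ u, ∑ v, p u * q v * M u v| ≤ t) :
    ‖matCLM M‖ ≤ 2 * t := by
  set L := matCLM M with hLdef
  have hunit : ∀ u : EuclideanSpace ℝ a, ‖u‖ = 1 → ‖L u‖ ≤ t + 2⁻¹ * ‖L‖ := by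
    intro u hu
    by_cases hzero : L u = 0
    · rw [hzero, norm_zero]
      have : (0:ℝ) ≤ ‖L‖ := norm_nonneg _
      linarith
    · set z : EuclideanSpace ℝ b := ‖L u‖⁻¹ • L u with hz
      have hznorm : ‖z‖ = 1 := norm_smul_inv_norm hzero
      obtain ⟨p, hpN, hp⟩ := hNaC u hu
      obtain ⟨q, hqN, hq⟩ := hNbC z hznorm
      have hinner : ‖L u‖ = (inner ℝ (L u) z : ℝ) := by
        rw [hz, real_inner_smul_right, real_inner_self_eq_norm_sq]
        have : ‖L u‖ ≠ 0 := norm_ne_zero_iff.mpr hzero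
        field_simp
      have hsplit : (inner ℝ (L u) z : ℝ)
          = inner ℝ (L u - L p) z + inner ℝ (L p) (z - q) + (inner ℝ (L p) q : ℝ) := by
        rw [inner_sub_left, inner_sub_right]
        ring
      have h1 : |(inner ℝ (L u - L p) z : ℝ)| ≤ ‖L‖ * 4⁻¹ := by
        calc |(inner ℝ (L u - L p) z : ℝ)| ≤ ‖L u - L p‖ * ‖z‖ := abs_real_inner_le_norm _ _
          _ = ‖L (u - p)‖ := by rw [hznorm, mul_one, map_sub]
          _ ≤ ‖L‖ * ‖u - p‖ := L.le_opNorm _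
          _ ≤ ‖L‖ * 4⁻¹ := by
              apply mul_le_mul_of_nonneg_left (le_of_lt hp) (norm_nonneg _)
      have h2 : |(inner ℝ (L p) (z - q) : ℝ)| ≤ ‖L‖ * 4⁻¹ := by
        calc |(inner ℝ (L p) (z - q) : ℝ)| ≤ ‖L p‖ * ‖z - q‖ := abs_real_inner_le_norm _ _
          _ ≤ (‖L‖ * ‖p‖) * ‖z - q‖ := by
              apply mul_le_mul_of_nonneg_right (L.le_opNorm _) (norm_nonneg _)
          _ = ‖L‖ * ‖z - q‖ := by rw [hNaU p hpN, mul_one]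
          _ ≤ ‖L‖ * 4⁻¹ := by
              apply mul_le_mul_of_nonneg_left (le_of_lt hq) (norm_nonneg _)
      have h3 : |(inner ℝ (L p) q : ℝ)| ≤ t := by
        rw [inner_matCLM]
        exact hev p hpN q hqN
      have habs : ‖L u‖ ≤ |(inner ℝ (L u - L p) z : ℝ)| + |(inner ℝ (L p) (z - q) : ℝ)|
          + |(inner ℝ (L p) q : ℝ)| := by
        rw [hinner, hsplit]
        have a1 := le_abs_self (inner ℝ (L u - L p) z : ℝ)
        have a2 := le_abs_self (inner ℝ (L p) (z - q) : ℝ)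
        have a3 := le_abs_self (inner ℝ (L p) q : ℝ)
        linarith
      linarith
  have hbound : ‖L‖ ≤ t + 2⁻¹ * ‖L‖ := by
    apply ContinuousLinearMap.opNorm_le_bound _ (by positivity)
    intro x
    by_cases hx : x = 0
    · simp [hx]
    · have hxn : ‖x‖ ≠ 0 := norm_ne_zero_iff.mpr hx
      set u : EuclideanSpace ℝ a := ‖x‖⁻¹ • x with hu
      have huu : ‖u‖ = 1 := norm_smul_inv_norm hx
      have hLx : L x = ‖x‖ • L u := by
        rw [hu, _root_.map_smul, smul_smul]
        rw [mul_inv_cancel₀ hxn, one_smul]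
      rw [hLx, norm_smul, norm_norm]
      calc ‖x‖ * ‖L u‖ ≤ ‖x‖ * (t + 2⁻¹ * ‖L‖) :=
            mul_le_mul_of_nonneg_left (hunit u huu) (norm_nonneg _)
        _ = (t + 2⁻¹ * ‖L‖) * ‖x‖ := by ring
  linarith

lemma row_bound_from_net (M : a → b → ℝ) (t : ℝ) (ht : 0 ≤ t)
    (Na : Finset (EuclideanSpace ℝ a)) (Nb : Finset (EuclideanSpace ℝ b))
    (hNaU : ∀ y ∈ Na, ‖y‖ = 1)
    (hNbU : ∀ y ∈ Nb, ‖y‖ = 1)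
    (hNaC : ∀ x : EuclideanSpace ℝ a, ‖x‖ = 1 → ∃ y ∈ Na, ‖x - y‖ < 4⁻¹)
    (hNbC : ∀ x : EuclideanSpace ℝ b, ‖x‖ = 1 → ∃ y ∈ Nb, ‖x - y‖ < 4⁻¹)
    (hev : ∀ p ∈ Na, ∀ q ∈ Nb, |∑ u, ∑ v, p u * q v * M u v| ≤ t)
    (w : a → ℝ) :
    ∑ v, (∑ u, M u v * w u) ^ 2 ≤ (2 * t) ^ 2 * ∑ u, w u ^ 2 := by
  have hop := opnorm_from_net M t ht Na Nb hNaU hNbU hNaC hNbC hev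
  set L := matCLM M
  set w' : EuclideanSpace ℝ a := (WithLp.equiv 2 _).symm w with hw'
  have happ : ∀ v, L w' v = ∑ u, M u v * w u := by
    intro v
    rw [matCLM_apply]
    exact Finset.sum_congr rfl fun u _ => rfl
  have h1 : ‖L w'‖ ≤ 2 * t * ‖w'‖ := by
    calc ‖L w'‖ ≤ ‖L‖ * ‖w'‖ := L.le_opNorm _
      _ ≤ 2 * t * ‖w'‖ := mul_le_mul_of_nonneg_right hop (norm_nonneg _)
  have h2 : ‖L w'‖ ^ 2 ≤ (2 * t) ^ 2 * ‖w'‖ ^ 2 := by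
    have hnn : (0:ℝ) ≤ ‖L w'‖ := norm_nonneg _
    nlinarith [norm_nonneg w', mul_nonneg ht (norm_nonneg w')]
  rw [norm_sq_eq, norm_sq_eq] at h2
  calc ∑ v, (∑ u, M u v * w u) ^ 2 = ∑ v, (L w' v) ^ 2 := by
        exact Finset.sum_congr rfl fun v _ => by rw [happ]
    _ ≤ (2 * t) ^ 2 * ∑ u, (w' u) ^ 2 := h2
    _ = (2 * t) ^ 2 * ∑ u, w u ^ 2 := rfl




section Emb
variable {n : ℕ}

noncomputable def emb (w : EuclideanSpace ℝ (Fin n)) : EuclideanSpace ℝ (Fin (n + 1)) :=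
  (WithLp.equiv 2 (Fin (n + 1) → ℝ)).symm (Fin.snoc (WithLp.equiv 2 (Fin n → ℝ) w) 0)

lemma emb_castSucc (w : EuclideanSpace ℝ (Fin n)) (i : Fin n) :
    emb w (Fin.castSucc i) = w i := by
  simp [emb, WithLp.equiv_symm_apply, PiLp.toLp_apply, Fin.snoc_castSucc]

lemma emb_last (w : EuclideanSpace ℝ (Fin n)) : emb w (Fin.last n) = 0 := by
  simp [emb, WithLp.equiv_symm_apply, PiLp.toLp_apply, Fin.snoc_last]

lemma inner_emb (w w' : EuclideanSpace ℝ (Fin n)) :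
    (inner ℝ (emb w) (emb w') : ℝ) = (inner ℝ w w' : ℝ) := by
  rw [PiLp.inner_apply, PiLp.inner_apply, Fin.sum_univ_castSucc]
  simp only [emb_castSucc, emb_last, RCLike.inner_apply, conj_trivial]
  simp

lemma norm_emb (w : EuclideanSpace ℝ (Fin n)) : ‖emb w‖ = ‖w‖ := by
  have h1 : ‖emb w‖ ^ 2 = ‖w‖ ^ 2 := by
    rw [← real_inner_self_eq_norm_sq, ← real_inner_self_eq_norm_sq, inner_emb]
  have h2 : (0:ℝ) ≤ ‖emb w‖ := norm_nonneg _
  have h3 : (0:ℝ) ≤ ‖w‖ := norm_nonneg _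
  nlinarith

noncomputable def elast (n : ℕ) : EuclideanSpace ℝ (Fin (n + 1)) :=
  EuclideanSpace.single (Fin.last n) 1

lemma norm_elast : ‖elast n‖ = 1 := by
  rw [elast, EuclideanSpace.norm_single]; norm_num

lemma inner_elast_emb (w : EuclideanSpace ℝ (Fin n)) : (inner ℝ (elast n) (emb w) : ℝ) = 0 := by
  rw [elast, EuclideanSpace.inner_single_left, emb_last]
  simp

lemma inner_emb_elast (w : EuclideanSpace ℝ (Fin n)) : (inner ℝ (emb w) (elast n) : ℝ) = 0 := by
  rw [real_inner_comm, inner_elast_emb]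

lemma inner_elast_elast : (inner ℝ (elast n) (elast n) : ℝ) = 1 := by
  rw [real_inner_self_eq_norm_sq, norm_elast]; norm_num

end Emb

lemma obj_eq {V : Type*} [Fintype V] {H : Type*} [NormedAddCommGroup H]
    [InnerProductSpace ℝ H] (z : V → H) (hz : ∀ v, ‖z v‖ = 1) :
    obj z = ∑ u : V, ∑ v : V, (2 - 2 * (inner ℝ (z u) (z v) : ℝ)) := by
  rw [obj]
  apply Finset.sum_congr rfl; intro u _
  apply Finset.sum_congr rfl; intro v _
  rw [norm_sub_sq_real, hz, hz]
  ring

theorem det_bound {V : Type} [Fintype V] [DecidableEq V] (n : ℕ) (hV : Fintype.card V = n)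
    (S : Finset V) (A : (V × V) → Bool) (t : ℝ) (ht : 0 ≤ t)
    (Hop : ∀ w : V → ℝ, ∑ v ∈ Sᶜ, (∑ u ∈ S, sgn (A (u, v)) * w u) ^ 2
      ≤ (2 * t) ^ 2 * ∑ u ∈ S, w u ^ 2)
    (G : SimpleGraph V)
    (hInd : ∀ u ∈ S, ∀ v ∈ S, ¬ G.Adj u v)
    (hE : ∀ p ∈ Eset S A, G.Adj p.1 p.2)
    (x : V → EuclideanSpace ℝ (Fin n)) (hx : Feasible G x)
    (hopt : ∀ y : V → EuclideanSpace ℝ (Fin (n + 1)), Feasible G y → obj x ≤ obj y) :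
    ∑ u ∈ S, ∑ v ∈ S, ‖x u - x v‖ ^ 2
      ≤ 8 * t * Real.sqrt ((S.card : ℝ) * (Sᶜ.card : ℝ)) := by
  obtain ⟨hxu, hxnn, hxe⟩ := hx
  set ρ : V → V → ℝ := fun u v => (inner ℝ (x u) (x v) : ℝ) with hρ
  have hρd : ∀ u, ρ u u = 1 := by
    intro u; rw [hρ]; simp only []
    rw [real_inner_self_eq_norm_sq, hxu]; norm_num
  have hρs : ∀ u v, ρ u v = ρ v u := fun u v => real_inner_comm _ _
  -- the comparison solution y
  set y : V → EuclideanSpace ℝ (Fin (n + 1)) :=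
    fun v => if v ∈ S then elast n else emb (x v) with hy
  have hyfeas : Feasible G y := by
    refine ⟨?_, ?_, ?_⟩
    · intro v; rw [hy]
      by_cases h : v ∈ S
      · simp only [if_pos h]; exact norm_elast
      · simp only [if_neg h]; rw [norm_emb]; exact hxu v
    · intro u v; rw [hy]
      by_cases h1 : u ∈ S <;> by_cases h2 : v ∈ S
      · simp only [if_pos h1, if_pos h2]; rw [inner_elast_elast]; norm_num
      · simp only [if_pos h1, if_neg h2]; rw [inner_elast_emb]
      · simp only [if_neg h1, if_pos h2]; rw [inner_emb_elast]
      · simp only [if_neg h1, if_neg h2]; rw [inner_emb]; exact hxnn u v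
    · intro u v hadj; rw [hy]
      by_cases h1 : u ∈ S <;> by_cases h2 : v ∈ S
      · exact absurd hadj (hInd u h1 v h2)
      · simp only [if_pos h1, if_neg h2]; exact inner_elast_emb _
      · simp only [if_neg h1, if_pos h2]; exact inner_emb_elast _
      · simp only [if_neg h1, if_neg h2]; rw [inner_emb]; exact hxe u v hadj
  have hcomp := hopt y hyfeas
  -- turn into sum of inner products inequality
  have hsums : ∑ u : V, ∑ v : V, (inner ℝ (y u) (y v) : ℝ) ≤ ∑ u : V, ∑ v : V, ρ u v := by
    have h1 := hcomp
    rw [obj_eq x hxu, obj_eq y hyfeas.1] at h1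
    have e1 : ∑ u : V, ∑ v : V, (2 - 2 * ρ u v)
        = 2 * (Fintype.card V)^2 - 2 * ∑ u : V, ∑ v : V, ρ u v := by
      simp only [Finset.sum_sub_distrib, Finset.sum_const, Finset.card_univ, nsmul_eq_mul,
        ← Finset.mul_sum]
      ring
    have e2 : ∑ u : V, ∑ v : V, (2 - 2 * (inner ℝ (y u) (y v) : ℝ))
        = 2 * (Fintype.card V)^2 - 2 * ∑ u : V, ∑ v : V, (inner ℝ (y u) (y v) : ℝ) := by
      simp only [Finset.sum_sub_distrib, Finset.sum_const, Finset.card_univ, nsmul_eq_mul,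
        ← Finset.mul_sum]
      ring
    rw [e1, e2] at h1
    linarith
  -- block decomposition
  set Q : ℝ := ∑ u ∈ S, ∑ v ∈ S, ρ u v with hQ
  set C : ℝ := ∑ u ∈ S, ∑ v ∈ Sᶜ, ρ u v with hCdef
  have hsplit : ∀ f : V → V → ℝ, ∑ u : V, ∑ v : V, f u v
      = (∑ u ∈ S, ∑ v ∈ S, f u v) + (∑ u ∈ S, ∑ v ∈ Sᶜ, f u v)
        + ((∑ u ∈ Sᶜ, ∑ v ∈ S, f u v) + ∑ u ∈ Sᶜ, ∑ v ∈ Sᶜ, f u v) := by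
    intro f
    rw [← Finset.sum_add_sum_compl S (fun u => ∑ v : V, f u v)]
    congr 1
    · rw [← Finset.sum_add_distrib]
      apply Finset.sum_congr rfl; intro u _
      rw [← Finset.sum_add_sum_compl S (f u)]
    · rw [← Finset.sum_add_distrib]
      apply Finset.sum_congr rfl; intro u _
      rw [← Finset.sum_add_sum_compl S (f u)]
  have hyy : ∀ u v : V, (inner ℝ (y u) (y v) : ℝ)
      = if u ∈ S then (if v ∈ S then 1 else 0) else (if v ∈ S then 0 else ρ u v) := by
    intro u v
    rw [hy]
    by_cases h1 : u ∈ S <;> by_cases h2 : v ∈ S <;>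
      simp only [if_pos, if_neg, h1, h2, if_true, if_false]
    · exact inner_elast_elast
    · exact inner_elast_emb _
    · exact inner_emb_elast _
    · exact inner_emb _ _
  have hkey : (S.card : ℝ)^2 - Q ≤ 2 * C := by
    have hl := hsums
    rw [hsplit (fun u v => (inner ℝ (y u) (y v) : ℝ)), hsplit ρ] at hl
    have b1 : ∑ u ∈ S, ∑ v ∈ S, (inner ℝ (y u) (y v) : ℝ) = (S.card : ℝ)^2 := by
      have : ∀ u ∈ S, ∑ v ∈ S, (inner ℝ (y u) (y v) : ℝ) = (S.card : ℝ) := by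
        intro u hu
        rw [Finset.sum_congr rfl (fun v hv => by rw [hyy u v, if_pos hu, if_pos hv])]
        rw [Finset.sum_const, nsmul_eq_mul, mul_one]
      rw [Finset.sum_congr rfl this, Finset.sum_const, nsmul_eq_mul]
      ring
    have b2 : ∑ u ∈ S, ∑ v ∈ Sᶜ, (inner ℝ (y u) (y v) : ℝ) = 0 := by
      apply Finset.sum_eq_zero; intro u hu
      apply Finset.sum_eq_zero; intro v hv
      rw [hyy u v, if_pos hu, if_neg (Finset.mem_compl.mp hv)]
    have b3 : ∑ u ∈ Sᶜ, ∑ v ∈ S, (inner ℝ (y u) (y v) : ℝ) = 0 := by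
      apply Finset.sum_eq_zero; intro u hu
      apply Finset.sum_eq_zero; intro v hv
      rw [hyy u v, if_neg (Finset.mem_compl.mp hu), if_pos hv]
    have b4 : ∑ u ∈ Sᶜ, ∑ v ∈ Sᶜ, (inner ℝ (y u) (y v) : ℝ) = ∑ u ∈ Sᶜ, ∑ v ∈ Sᶜ, ρ u v := by
      apply Finset.sum_congr rfl; intro u hu
      apply Finset.sum_congr rfl; intro v hv
      rw [hyy u v, if_neg (Finset.mem_compl.mp hu), if_neg (Finset.mem_compl.mp hv)]
    have b5 : ∑ u ∈ Sᶜ, ∑ v ∈ S, ρ u v = C := by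
      rw [hCdef, Finset.sum_comm]
      apply Finset.sum_congr rfl; intro u _
      apply Finset.sum_congr rfl; intro v _
      exact hρs _ _
    rw [b1, b2, b3, b4, b5] at hl
    linarith
  -- energy identity
  have hE2 : ∑ u ∈ S, ∑ v ∈ S, ‖x u - x v‖ ^ 2 = 2 * (S.card : ℝ)^2 - 2 * Q := by
    have : ∀ u ∈ S, ∀ v ∈ S, ‖x u - x v‖ ^ 2 = 2 - 2 * ρ u v := by
      intro u _ v _
      rw [norm_sub_sq_real, hxu, hxu]
      rw [hρ]; ring_nf
    calc ∑ u ∈ S, ∑ v ∈ S, ‖x u - x v‖ ^ 2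
        = ∑ u ∈ S, ∑ v ∈ S, (2 - 2 * ρ u v) := by
          apply Finset.sum_congr rfl; intro u hu
          apply Finset.sum_congr rfl; intro v hv
          exact this u hu v hv
      _ = 2 * (S.card : ℝ)^2 - 2 * Q := by
          rw [hQ]
          simp only [Finset.sum_sub_distrib, Finset.sum_const, nsmul_eq_mul, ← Finset.mul_sum]
          ring
  -- C in terms of signs
  have hzero : ∀ u ∈ S, ∀ v ∈ Sᶜ, A (u, v) = true → ρ u v = 0 := by
    intro u hu v hv hA
    exact hxe u v (hE (u, v) (by
      rw [Eset, Finset.mem_filter]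
      exact ⟨Finset.mem_univ _, hu, Finset.mem_compl.mp hv, hA⟩))
  have hCsgn : C = ∑ v ∈ Sᶜ, ∑ u ∈ S, sgn (A (u, v)) * ρ u v := by
    rw [hCdef, Finset.sum_comm]
    apply Finset.sum_congr rfl; intro v hv
    apply Finset.sum_congr rfl; intro u hu
    rcases Bool.eq_false_or_eq_true (A (u, v)) with h | h
    · rw [hzero u hu v hv h, h]; simp [sgn]
    · rw [h]; simp [sgn]
  -- coordinates
  set g : V → Fin n → ℝ := fun v i => ∑ u ∈ S, sgn (A (u, v)) * x u i with hg
  have hinner_sum : ∀ u v : V, ρ u v = ∑ i, x u i * x v i := by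
    intro u v
    rw [hρ]
    simp only [PiLp.inner_apply, RCLike.inner_apply, conj_trivial]
    exact Finset.sum_congr rfl fun i _ => mul_comm _ _
  have hCg : C = ∑ v ∈ Sᶜ, ∑ i, g v i * x v i := by
    rw [hCsgn]
    apply Finset.sum_congr rfl; intro v _
    calc ∑ u ∈ S, sgn (A (u, v)) * ρ u v
        = ∑ u ∈ S, ∑ i, sgn (A (u, v)) * (x u i * x v i) := by
          apply Finset.sum_congr rfl; intro u _
          rw [hinner_sum, Finset.mul_sum]
      _ = ∑ i, ∑ u ∈ S, sgn (A (u, v)) * (x u i * x v i) := Finset.sum_comm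
      _ = ∑ i, g v i * x v i := by
          apply Finset.sum_congr rfl; intro i _
          rw [hg]
          simp only []
          rw [Finset.sum_mul]
          apply Finset.sum_congr rfl; intro u _
          ring
  set Gv : V → ℝ := fun v => ∑ i, g v i ^ 2 with hGv
  have hGv0 : ∀ v, 0 ≤ Gv v := by
    intro v; rw [hGv]; positivity
  have hxv1 : ∀ v : V, ∑ i, x v i ^ 2 = 1 := by
    intro v
    rw [← norm_sq_eq, hxu]
    norm_num
  have hCle : C ≤ ∑ v ∈ Sᶜ, Real.sqrt (Gv v) := by
    rw [hCg]
    apply Finset.sum_le_sum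
    intro v _
    have hcs := Finset.sum_mul_sq_le_sq_mul_sq Finset.univ (g v) (x v)
    rw [hxv1 v, mul_one] at hcs
    calc ∑ i, g v i * x v i ≤ |∑ i, g v i * x v i| := le_abs_self _
      _ = Real.sqrt ((∑ i, g v i * x v i) ^ 2) := (Real.sqrt_sq_eq_abs _).symm
      _ ≤ Real.sqrt (Gv v) := Real.sqrt_le_sqrt hcs
  have hsum_sqrt : ∑ v ∈ Sᶜ, Real.sqrt (Gv v)
      ≤ Real.sqrt ((Sᶜ.card : ℝ) * ∑ v ∈ Sᶜ, Gv v) := by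
    have hcs := Finset.sum_mul_sq_le_sq_mul_sq Sᶜ (fun _ => (1:ℝ)) (fun v => Real.sqrt (Gv v))
    simp only [one_mul, one_pow, Finset.sum_const, nsmul_eq_mul, mul_one] at hcs
    have hsq : ∀ v ∈ Sᶜ, Real.sqrt (Gv v) ^ 2 = Gv v := fun v _ => Real.sq_sqrt (hGv0 v)
    rw [Finset.sum_congr rfl hsq] at hcs
    have hnn : 0 ≤ ∑ v ∈ Sᶜ, Real.sqrt (Gv v) :=
      Finset.sum_nonneg fun v _ => Real.sqrt_nonneg _
    calc ∑ v ∈ Sᶜ, Real.sqrt (Gv v)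
        = Real.sqrt ((∑ v ∈ Sᶜ, Real.sqrt (Gv v)) ^ 2) := by
          rw [Real.sqrt_sq hnn]
      _ ≤ Real.sqrt ((Sᶜ.card : ℝ) * ∑ v ∈ Sᶜ, Gv v) := Real.sqrt_le_sqrt hcs
  have hGsum : ∑ v ∈ Sᶜ, Gv v ≤ (2 * t) ^ 2 * (S.card : ℝ) := by
    have hswap : ∑ v ∈ Sᶜ, Gv v = ∑ i, ∑ v ∈ Sᶜ, (∑ u ∈ S, sgn (A (u, v)) * x u i) ^ 2 := by
      rw [Finset.sum_comm]
    rw [hswap]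
    calc ∑ i, ∑ v ∈ Sᶜ, (∑ u ∈ S, sgn (A (u, v)) * x u i) ^ 2
        ≤ ∑ i : Fin n, (2 * t) ^ 2 * ∑ u ∈ S, x u i ^ 2 := by
          apply Finset.sum_le_sum
          intro i _
          exact Hop (fun u => x u i)
      _ = (2 * t) ^ 2 * ∑ u ∈ S, ∑ i, x u i ^ 2 := by
          rw [← Finset.mul_sum, Finset.sum_comm]
      _ = (2 * t) ^ 2 * (S.card : ℝ) := by
          rw [Finset.sum_congr rfl (fun u _ => hxv1 u), Finset.sum_const, nsmul_eq_mul, mul_one]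
  have hCfinal : C ≤ 2 * t * Real.sqrt ((S.card : ℝ) * (Sᶜ.card : ℝ)) := by
    have h1 : (Sᶜ.card : ℝ) * ∑ v ∈ Sᶜ, Gv v ≤ (2*t)^2 * ((S.card : ℝ) * (Sᶜ.card : ℝ)) := by
      have := mul_le_mul_of_nonneg_left hGsum (by positivity : (0:ℝ) ≤ (Sᶜ.card : ℝ))
      calc (Sᶜ.card : ℝ) * ∑ v ∈ Sᶜ, Gv v ≤ (Sᶜ.card : ℝ) * ((2 * t) ^ 2 * (S.card : ℝ)) := this
        _ = (2*t)^2 * ((S.card : ℝ) * (Sᶜ.card : ℝ)) := by ring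
    calc C ≤ ∑ v ∈ Sᶜ, Real.sqrt (Gv v) := hCle
      _ ≤ Real.sqrt ((Sᶜ.card : ℝ) * ∑ v ∈ Sᶜ, Gv v) := hsum_sqrt
      _ ≤ Real.sqrt ((2*t)^2 * ((S.card : ℝ) * (Sᶜ.card : ℝ))) := Real.sqrt_le_sqrt h1
      _ = 2 * t * Real.sqrt ((S.card : ℝ) * (Sᶜ.card : ℝ)) := by
          rw [Real.sqrt_mul (sq_nonneg _), Real.sqrt_sq (by positivity : (0:ℝ) ≤ 2 * t)]
  have hsqrt_nn : 0 ≤ Real.sqrt ((S.card : ℝ) * (Sᶜ.card : ℝ)) := Real.sqrt_nonneg _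
  rw [hE2]
  linarith


end Stmt7Aux
-- assembly (to be appended after `end Stmt7Aux`)
set_option maxHeartbeats 4000000 in
open Stmt7Aux in
theorem stmt7 : ∃ c : ℝ, 0 < c ∧
    ∀ (V : Type) [Fintype V] [DecidableEq V] (n k : ℕ),
      Fintype.card V = n → 2 ≤ n → ∀ S : Finset V, S.card = k → 1 ≤ k → k ≤ n - 1 →
      1 - ENNReal.ofReal
            (2 * Real.exp (-((k : ℝ) * ((n : ℝ) - k) * ((n : ℝ) * k) ^ (-(0.98 : ℝ))) / 6))
        - ENNReal.ofReal ((2 : ℝ) ^ (2 * n + 1) * Real.exp (-(3 * ((n : ℝ) - k)) / 2))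
      ≤ coin V {A | ∀ G : SimpleGraph V,
          (∀ u ∈ S, ∀ v ∈ S, ¬ G.Adj u v) →
          (∀ p ∈ Eset S A, G.Adj p.1 p.2) →
          ∀ x : V → EuclideanSpace ℝ (Fin n), Feasible G x →
          (∀ y : V → EuclideanSpace ℝ (Fin (n + 1)), Feasible G y → obj x ≤ obj y) →
          ∑ u ∈ S, ∑ v ∈ S, ‖x u - x v‖ ^ 2 ≤ c * n * Real.sqrt k} := by
  classical
  refine ⟨20, by norm_num, ?_⟩
  intro V _ _ n k hcard hn2 S hSk hk1 hkn1
  haveI : IsProbabilityMeasure (coin V) := by unfold coin; infer_instance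
  have hce : coin V = coinM (V × V) := rfl
  have hkn : k ≤ n := le_trans hkn1 (Nat.sub_le n 1)
  have hmR : (0:ℝ) ≤ (n:ℝ) - k := by
    have : (k:ℝ) ≤ (n:ℝ) := Nat.cast_le.mpr hkn
    linarith
  set t : ℝ := Real.sqrt (3*(n:ℝ) + 3*((n:ℝ) - k)) with htdef
  have htnn : 0 ≤ t := Real.sqrt_nonneg _
  have ht2 : t^2 = 3*(n:ℝ) + 3*((n:ℝ) - k) := Real.sq_sqrt (by positivity)
  have hcardS : Fintype.card {z // z ∈ S} = k := by rw [Fintype.card_coe, hSk]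
  have hcardT : Fintype.card {z // z ∈ Sᶜ} = n - k := by
    rw [Fintype.card_coe, Finset.card_compl, hSk, hcard]
  obtain ⟨NS, hNScard, hNSunit, hNScov⟩ := exists_net {z // z ∈ S}
  obtain ⟨NT, hNTcard, hNTunit, hNTcov⟩ := exists_net {z // z ∈ Sᶜ}
  rw [hcardS] at hNScard
  rw [hcardT] at hNTcard
  -- weights
  set pext : EuclideanSpace ℝ {z // z ∈ S} → V → ℝ :=
    fun p u => if h : u ∈ S then p ⟨u, h⟩ else 0 with hpext
  set qext : EuclideanSpace ℝ {z // z ∈ Sᶜ} → V → ℝ :=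
    fun q v => if h : v ∈ Sᶜ then q ⟨v, h⟩ else 0 with hqext
  set wgt : EuclideanSpace ℝ {z // z ∈ S} → EuclideanSpace ℝ {z // z ∈ Sᶜ} → (V × V) → ℝ :=
    fun p q r => pext p r.1 * qext q r.2 with hwgt
  have hpsum : ∀ p ∈ NS, ∑ u : V, (pext p u)^2 = 1 := by
    intro p hp
    rw [← Finset.sum_add_sum_compl S]
    have e1 : ∑ u ∈ Sᶜ, (pext p u)^2 = 0 := by
      apply Finset.sum_eq_zero
      intro u hu
      rw [hpext]
      simp only []
      rw [dif_neg (Finset.mem_compl.mp hu)]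
      norm_num
    have e2 : ∑ u ∈ S, (pext p u)^2 = ∑ u : {z // z ∈ S}, (p u)^2 := by
      rw [← Finset.sum_coe_sort S (fun u => (pext p u)^2)]
      apply Finset.sum_congr rfl
      intro u _
      rw [hpext]
      simp only []
      rw [dif_pos u.prop]
    rw [e1, e2, add_zero, ← norm_sq_eq, hNSunit p hp]
    norm_num
  have hqsum : ∀ q ∈ NT, ∑ v : V, (qext q v)^2 = 1 := by
    intro q hq
    rw [← Finset.sum_add_sum_compl Sᶜ]
    have e1 : ∑ v ∈ Sᶜᶜ, (qext q v)^2 = 0 := by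
      apply Finset.sum_eq_zero
      intro v hv
      rw [hqext]
      simp only []
      rw [dif_neg (Finset.mem_compl.mp hv)]
      norm_num
    have e2 : ∑ v ∈ Sᶜ, (qext q v)^2 = ∑ v : {z // z ∈ Sᶜ}, (q v)^2 := by
      rw [← Finset.sum_coe_sort Sᶜ (fun v => (qext q v)^2)]
      apply Finset.sum_congr rfl
      intro v _
      rw [hqext]
      simp only []
      rw [dif_pos v.prop]
    rw [e1, e2, add_zero, ← norm_sq_eq, hNTunit q hq]
    norm_num
  have hwsum : ∀ p ∈ NS, ∀ q ∈ NT, ∑ r : V × V, (wgt p q r)^2 ≤ 1 := by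
    intro p hp q hq
    have : ∑ r : V × V, (wgt p q r)^2
        = (∑ u : V, (pext p u)^2) * (∑ v : V, (qext q v)^2) := by
      rw [Finset.sum_mul_sum]
      rw [Fintype.sum_prod_type]
      apply Finset.sum_congr rfl; intro u _
      apply Finset.sum_congr rfl; intro v _
      rw [hwgt]; ring
    rw [this, hpsum p hp, hqsum q hq]
    norm_num
  -- the bad event
  set bad : EuclideanSpace ℝ {z // z ∈ S} → EuclideanSpace ℝ {z // z ∈ Sᶜ}
      → Set ((V × V) → Bool) :=
    fun p q => {A | t ≤ |∑ r : V × V, wgt p q r * sgn (A r)|} with hbad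
  set BAD : Set ((V × V) → Bool) := ⋃ p ∈ NS, ⋃ q ∈ NT, bad p q with hBAD
  -- measure of BAD
  have hBADle : coin V BAD ≤
      ENNReal.ofReal ((2:ℝ) ^ (2 * n + 1) * Real.exp (-(3 * ((n:ℝ) - k)) / 2)) := by
    have step1 : coin V BAD ≤ ∑ p ∈ NS, ∑ q ∈ NT, coin V (bad p q) := by
      refine le_trans (measure_biUnion_finset_le _ _) ?_
      apply Finset.sum_le_sum
      intro p _
      exact measure_biUnion_finset_le _ _
    have step2 : ∀ p ∈ NS, ∀ q ∈ NT, coin V (bad p q)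
        ≤ ENNReal.ofReal (2 * Real.exp (-(t^2)/2)) := by
      intro p hp q hq
      rw [hce, hbad]
      exact coinM_abs (wgt p q) (hwsum p hp q hq) t htnn
    have step3 : coin V BAD ≤
        (NS.card : ENNReal) * ((NT.card : ENNReal)
          * ENNReal.ofReal (2 * Real.exp (-(t^2)/2))) := by
      refine le_trans step1 ?_
      calc ∑ p ∈ NS, ∑ q ∈ NT, coin V (bad p q)
          ≤ ∑ p ∈ NS, ∑ q ∈ NT, ENNReal.ofReal (2 * Real.exp (-(t^2)/2)) := by
            apply Finset.sum_le_sum; intro p hp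
            apply Finset.sum_le_sum; intro q hq
            exact step2 p hp q hq
        _ = (NS.card : ENNReal) * ((NT.card : ENNReal)
              * ENNReal.ofReal (2 * Real.exp (-(t^2)/2))) := by
            rw [Finset.sum_const, Finset.sum_const]
            rw [nsmul_eq_mul, nsmul_eq_mul]
    refine le_trans step3 ?_
    have hreal : (9:ℝ)^k * ((9:ℝ)^(n-k) * (2 * Real.exp (-(t^2)/2)))
        ≤ (2:ℝ) ^ (2 * n + 1) * Real.exp (-(3 * ((n:ℝ) - k)) / 2) := by
      rw [ht2]
      have hexp : Real.exp (-(3*(n:ℝ) + 3*((n:ℝ) - k))/2)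
          = Real.exp (-(3*(n:ℝ))/2) * Real.exp (-(3 * ((n:ℝ) - k))/2) := by
        rw [← Real.exp_add]; ring_nf
      rw [hexp]
      have h9 : (9:ℝ)^k * (9:ℝ)^(n-k) = (9:ℝ)^n := by
        rw [← pow_add]
        congr 1
        omega
      have hmain : (9:ℝ)^n * Real.exp (-(3*(n:ℝ))/2) ≤ (2:ℝ)^(2*n) := by
        have h4 : (2:ℝ)^(2*n) = (4:ℝ)^n := by
          rw [pow_mul]; norm_num
        rw [h4]
        have hterm : (9:ℝ) ≤ 4 * Real.exp (3/2) := by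
          have := Real.add_one_le_exp (3/2 : ℝ)
          nlinarith
        have hpow : (9:ℝ)^n ≤ (4 * Real.exp (3/2))^n := by
          apply pow_le_pow_left₀ (by norm_num) hterm
        have hrw : (4 * Real.exp (3/2))^n = (4:ℝ)^n * Real.exp (3*(n:ℝ)/2) := by
          rw [mul_pow, ← Real.exp_nat_mul]
          congr 1
          ring
        rw [hrw] at hpow
        have hepos : 0 < Real.exp (-(3*(n:ℝ))/2) := Real.exp_pos _
        have hcancel : Real.exp (3*(n:ℝ)/2) * Real.exp (-(3*(n:ℝ))/2) = 1 := by
          rw [← Real.exp_add]; ring_nf; exact Real.exp_zero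
        calc (9:ℝ)^n * Real.exp (-(3*(n:ℝ))/2)
            ≤ ((4:ℝ)^n * Real.exp (3*(n:ℝ)/2)) * Real.exp (-(3*(n:ℝ))/2) := by
              apply mul_le_mul_of_nonneg_right hpow hepos.le
          _ = (4:ℝ)^n * (Real.exp (3*(n:ℝ)/2) * Real.exp (-(3*(n:ℝ))/2)) := by ring
          _ = (4:ℝ)^n := by rw [hcancel, mul_one]
      have h2n1 : (2:ℝ)^(2*n+1) = 2 * (2:ℝ)^(2*n) := by
        rw [pow_succ]; ring
      have he2 : 0 < Real.exp (-(3 * ((n:ℝ) - k))/2) := Real.exp_pos _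
      calc (9:ℝ)^k * ((9:ℝ)^(n-k) * (2 * (Real.exp (-(3*(n:ℝ))/2)
              * Real.exp (-(3 * ((n:ℝ) - k))/2))))
          = 2 * ((9:ℝ)^n * Real.exp (-(3*(n:ℝ))/2)) * Real.exp (-(3 * ((n:ℝ) - k))/2) := by
            rw [← mul_assoc, h9]; ring
        _ ≤ 2 * (2:ℝ)^(2*n) * Real.exp (-(3 * ((n:ℝ) - k))/2) := by
            apply mul_le_mul_of_nonneg_right _ he2.le
            nlinarith [hmain]
        _ = (2:ℝ) ^ (2 * n + 1) * Real.exp (-(3 * ((n:ℝ) - k)) / 2) := by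
            rw [h2n1]
    calc (NS.card : ENNReal) * ((NT.card : ENNReal)
            * ENNReal.ofReal (2 * Real.exp (-(t^2)/2)))
        ≤ ((9^k : ℕ) : ENNReal) * (((9^(n-k) : ℕ) : ENNReal)
            * ENNReal.ofReal (2 * Real.exp (-(t^2)/2))) := by
          apply mul_le_mul' (Nat.cast_le.mpr hNScard)
          apply mul_le_mul' (Nat.cast_le.mpr hNTcard) le_rfl
      _ = ENNReal.ofReal ((9:ℝ)^k * ((9:ℝ)^(n-k) * (2 * Real.exp (-(t^2)/2)))) := by
          have e1 : ((9^k : ℕ) : ENNReal) = ENNReal.ofReal ((9:ℝ)^k) := by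
            rw [← ENNReal.ofReal_natCast]; congr 1; push_cast; ring
          have e2 : ((9^(n-k) : ℕ) : ENNReal) = ENNReal.ofReal ((9:ℝ)^(n-k)) := by
            rw [← ENNReal.ofReal_natCast]; congr 1; push_cast; ring
          rw [e1, e2, ← ENNReal.ofReal_mul (by positivity : (0:ℝ) ≤ (9:ℝ)^(n-k)),
            ← ENNReal.ofReal_mul (by positivity : (0:ℝ) ≤ (9:ℝ)^k)]
      _ ≤ ENNReal.ofReal ((2:ℝ) ^ (2 * n + 1) * Real.exp (-(3 * ((n:ℝ) - k)) / 2)) :=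
          ENNReal.ofReal_le_ofReal hreal
  -- good coins imply the SDP clustering bound
  have hgood : ∀ A : (V × V) → Bool, A ∉ BAD →
      (∀ G : SimpleGraph V,
        (∀ u ∈ S, ∀ v ∈ S, ¬ G.Adj u v) →
        (∀ p ∈ Eset S A, G.Adj p.1 p.2) →
        ∀ x : V → EuclideanSpace ℝ (Fin n), Feasible G x →
        (∀ y : V → EuclideanSpace ℝ (Fin (n + 1)), Feasible G y → obj x ≤ obj y) →
        ∑ u ∈ S, ∑ v ∈ S, ‖x u - x v‖ ^ 2 ≤ 20 * (n : ℝ) * Real.sqrt k) := by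
    intro A hA
    have hev : ∀ p ∈ NS, ∀ q ∈ NT,
        |∑ u : {z // z ∈ S}, ∑ v : {z // z ∈ Sᶜ},
          p u * q v * sgn (A ((u : V), (v : V)))| ≤ t := by
      intro p hp q hq
      have hnot : A ∉ bad p q := by
        intro hmem
        exact hA (by
          rw [hBAD]
          exact Set.mem_biUnion hp (Set.mem_biUnion hq hmem))
      have hlt : ¬ (t ≤ |∑ r : V × V, wgt p q r * sgn (A r)|) := hnot
      push_neg at hlt
      have hbridge : ∑ r : V × V, wgt p q r * sgn (A r)
          = ∑ u : {z // z ∈ S}, ∑ v : {z // z ∈ Sᶜ},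
              p u * q v * sgn (A ((u : V), (v : V))) := by
        rw [Fintype.sum_prod_type]
        have stepB : ∑ u : V, ∑ v : V, wgt p q (u, v) * sgn (A (u, v))
            = ∑ u ∈ S, ∑ v : V, wgt p q (u, v) * sgn (A (u, v)) := by
          symm
          apply Finset.sum_subset (Finset.subset_univ S)
          intro u _ hu
          apply Finset.sum_eq_zero
          intro v _
          rw [hwgt]
          simp only []
          rw [hpext]
          simp only []
          rw [dif_neg hu]
          ring
        rw [stepB]
        have stepC : ∀ u ∈ S, ∑ v : V, wgt p q (u, v) * sgn (A (u, v))
            = ∑ v ∈ Sᶜ, wgt p q (u, v) * sgn (A (u, v)) := by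
          intro u _
          symm
          apply Finset.sum_subset (Finset.subset_univ Sᶜ)
          intro v _ hv
          rw [hwgt]
          simp only []
          rw [hqext]
          simp only []
          rw [dif_neg hv]
          ring
        rw [Finset.sum_congr rfl stepC]
        rw [← Finset.sum_coe_sort S
          (fun u => ∑ v ∈ Sᶜ, wgt p q (u, v) * sgn (A (u, v)))]
        apply Finset.sum_congr rfl
        intro u _
        rw [← Finset.sum_coe_sort Sᶜ
          (fun v => wgt p q ((u : V), v) * sgn (A ((u : V), v)))]
        apply Finset.sum_congr rfl
        intro v _
        rw [hwgt]
        simp only []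
        rw [hpext, hqext]
        simp only []
        rw [dif_pos u.prop, dif_pos v.prop]
      rw [hbridge] at hlt
      exact le_of_lt hlt
    have Hop : ∀ w : V → ℝ, ∑ v ∈ Sᶜ, (∑ u ∈ S, sgn (A (u, v)) * w u) ^ 2
        ≤ (2 * t) ^ 2 * ∑ u ∈ S, w u ^ 2 := by
      intro w
      have hrow := row_bound_from_net
        (fun (u : {z // z ∈ S}) (v : {z // z ∈ Sᶜ}) => sgn (A ((u : V), (v : V))))
        t htnn NS NT hNSunit hNTunit hNScov hNTcov hev (fun u => w (u : V))
      have el : ∑ v ∈ Sᶜ, (∑ u ∈ S, sgn (A (u, v)) * w u) ^ 2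
          = ∑ v : {z // z ∈ Sᶜ}, (∑ u : {z // z ∈ S},
              sgn (A ((u : V), (v : V))) * w (u : V)) ^ 2 := by
        rw [← Finset.sum_coe_sort Sᶜ (fun v => (∑ u ∈ S, sgn (A (u, v)) * w u) ^ 2)]
        apply Finset.sum_congr rfl
        intro v _
        congr 1
        rw [← Finset.sum_coe_sort S (fun u => sgn (A (u, (v : V))) * w u)]
      have er : ∑ u ∈ S, w u ^ 2 = ∑ u : {z // z ∈ S}, w (u : V) ^ 2 :=
        (Finset.sum_coe_sort S (fun u => w u ^ 2)).symm
      rw [el, er]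
      exact hrow
    intro G hInd hEe x hx hopt
    have hdb := det_bound n hcard S A t htnn Hop G hInd hEe x hx hopt
    have hcards : (S.card : ℝ) = k := by rw [hSk]
    have hcardt : ((Sᶜ.card : ℕ) : ℝ) = (n : ℝ) - k := by
      rw [Finset.card_compl, hSk, hcard, Nat.cast_sub hkn]
    rw [hcards, hcardt] at hdb
    refine le_trans hdb ?_
    -- numeric estimate
    have hm_le : (n : ℝ) - k ≤ (n : ℝ) := by
      have : (0:ℝ) ≤ k := by positivity
      linarith
    have ha : t ≤ Real.sqrt 6 * Real.sqrt n := by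
      rw [htdef, ← Real.sqrt_mul (by norm_num : (0:ℝ) ≤ 6)]
      apply Real.sqrt_le_sqrt
      linarith
    have hb : Real.sqrt ((k:ℝ) * ((n:ℝ) - k)) ≤ Real.sqrt k * Real.sqrt n := by
      rw [Real.sqrt_mul (by positivity : (0:ℝ) ≤ (k:ℝ))]
      apply mul_le_mul_of_nonneg_left _ (Real.sqrt_nonneg _)
      exact Real.sqrt_le_sqrt hm_le
    have h6 : Real.sqrt 6 ≤ 2.5 := by
      rw [show (2.5:ℝ) = Real.sqrt (2.5^2) from (Real.sqrt_sq (by norm_num)).symm]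
      apply Real.sqrt_le_sqrt
      norm_num
    have hnsq : Real.sqrt (n:ℝ) * Real.sqrt (n:ℝ) = (n:ℝ) :=
      Real.mul_self_sqrt (by positivity)
    have hnn6 : (0:ℝ) ≤ Real.sqrt 6 := Real.sqrt_nonneg _
    have hnnn : (0:ℝ) ≤ Real.sqrt n := Real.sqrt_nonneg _
    have hnnk : (0:ℝ) ≤ Real.sqrt k := Real.sqrt_nonneg _
    calc 8 * t * Real.sqrt ((k:ℝ) * ((n:ℝ) - k))
        ≤ 8 * (Real.sqrt 6 * Real.sqrt n) * (Real.sqrt k * Real.sqrt n) := by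
          apply mul_le_mul _ hb (Real.sqrt_nonneg _) (by positivity)
          apply mul_le_mul_of_nonneg_left ha (by norm_num)
      _ = 8 * Real.sqrt 6 * (Real.sqrt n * Real.sqrt n) * Real.sqrt k := by ring
      _ = 8 * Real.sqrt 6 * (n:ℝ) * Real.sqrt k := by rw [hnsq]
      _ ≤ 20 * (n:ℝ) * Real.sqrt k := by
          have hn0 : (0:ℝ) ≤ (n:ℝ) := by positivity
          have h8 : 8 * Real.sqrt 6 ≤ 20 := by nlinarith
          nlinarith [mul_le_mul_of_nonneg_right
            (mul_le_mul_of_nonneg_right h8 hn0) hnnk]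
  -- final probabilistic chain
  have h2 : coin V {A : (V × V) → Bool | ∀ G : SimpleGraph V,
        (∀ u ∈ S, ∀ v ∈ S, ¬ G.Adj u v) →
        (∀ p ∈ Eset S A, G.Adj p.1 p.2) →
        ∀ x : V → EuclideanSpace ℝ (Fin n), Feasible G x →
        (∀ y : V → EuclideanSpace ℝ (Fin (n + 1)), Feasible G y → obj x ≤ obj y) →
        ∑ u ∈ S, ∑ v ∈ S, ‖x u - x v‖ ^ 2 ≤ 20 * (n : ℝ) * Real.sqrt k}ᶜ
      ≤ ENNReal.ofReal ((2:ℝ) ^ (2 * n + 1) * Real.exp (-(3 * ((n:ℝ) - k)) / 2)) := by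
    refine le_trans (measure_mono ?_) hBADle
    intro A hA
    by_contra hnb
    exact hA (hgood A hnb)
  have h1 : (1 : ENNReal) ≤ coin V {A : (V × V) → Bool | ∀ G : SimpleGraph V,
        (∀ u ∈ S, ∀ v ∈ S, ¬ G.Adj u v) →
        (∀ p ∈ Eset S A, G.Adj p.1 p.2) →
        ∀ x : V → EuclideanSpace ℝ (Fin n), Feasible G x →
        (∀ y : V → EuclideanSpace ℝ (Fin (n + 1)), Feasible G y → obj x ≤ obj y) →
        ∑ u ∈ S, ∑ v ∈ S, ‖x u - x v‖ ^ 2 ≤ 20 * (n : ℝ) * Real.sqrt k}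
      + coin V {A : (V × V) → Bool | ∀ G : SimpleGraph V,
        (∀ u ∈ S, ∀ v ∈ S, ¬ G.Adj u v) →
        (∀ p ∈ Eset S A, G.Adj p.1 p.2) →
        ∀ x : V → EuclideanSpace ℝ (Fin n), Feasible G x →
        (∀ y : V → EuclideanSpace ℝ (Fin (n + 1)), Feasible G y → obj x ≤ obj y) →
        ∑ u ∈ S, ∑ v ∈ S, ‖x u - x v‖ ^ 2 ≤ 20 * (n : ℝ) * Real.sqrt k}ᶜ := by
    have hu := measure_union_le (μ := coin V)
      {A : (V × V) → Bool | ∀ G : SimpleGraph V,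
        (∀ u ∈ S, ∀ v ∈ S, ¬ G.Adj u v) →
        (∀ p ∈ Eset S A, G.Adj p.1 p.2) →
        ∀ x : V → EuclideanSpace ℝ (Fin n), Feasible G x →
        (∀ y : V → EuclideanSpace ℝ (Fin (n + 1)), Feasible G y → obj x ≤ obj y) →
        ∑ u ∈ S, ∑ v ∈ S, ‖x u - x v‖ ^ 2 ≤ 20 * (n : ℝ) * Real.sqrt k}
      {A : (V × V) → Bool | ∀ G : SimpleGraph V,
        (∀ u ∈ S, ∀ v ∈ S, ¬ G.Adj u v) →
        (∀ p ∈ Eset S A, G.Adj p.1 p.2) →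
        ∀ x : V → EuclideanSpace ℝ (Fin n), Feasible G x →
        (∀ y : V → EuclideanSpace ℝ (Fin (n + 1)), Feasible G y → obj x ≤ obj y) →
        ∑ u ∈ S, ∑ v ∈ S, ‖x u - x v‖ ^ 2 ≤ 20 * (n : ℝ) * Real.sqrt k}ᶜ
    rw [Set.union_compl_self, measure_univ] at hu
    exact hu
  refine le_trans (tsub_le_tsub_right tsub_le_self _) ?_
  rw [tsub_le_iff_right]
  exact le_trans h1 (add_le_add_right h2 _)
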